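/- arXiv:2201.10285 — 4 statements merged into one kernel-verified Lean document; each statement's English description precedes it below -/
import Mathlib

section
/- Minimizers of ‖M − R⊗S‖_F over pairs (R,S) coincide with minimizers of the rank-one approximation problem ‖Z(M) − vec(R)vec(S)ᵀ‖_F, i.e., (R,S) minimizes the first objective if and only if (vec(R), vec(S)) minimizes the second. -/
open Matrix Kronecker BigOperators

/-- Frobenius norm of a real matrix. -/
noncomputable def frob {m n : Type*} [Fintype m] [Fintype n] (M : Matrix m n ℝ) : ℝ :=
  Real.sqrt (∑ i, ∑ j, (M i j) ^ 2)

/-- Column-stacking vectorization: `vecc M (j, i) = M i j`. -/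
def vecc {m n : Type*} (M : Matrix m n ℝ) : n × m → ℝ := fun p => M p.2 p.1

/-- MAT, the inverse of the column-stacking `vecc`. -/
def matify {m n : Type*} (v : n × m → ℝ) : Matrix m n ℝ :=
  Matrix.of fun i j => v (j, i)

/-- Zigzag rearrangement operator: the row indexed by the block position `(ν, μ)`
of `Zig M` is the transposed vectorization of the block `M_{μ,ν}`. -/
def Zig {d d' : Type*} (M : Matrix (d × d') (d × d') ℝ) :
    Matrix (d × d) (d' × d') ℝ :=
  Matrix.of fun p q => M (p.2, q.2) (p.1, q.1)

def zigEquiv (d d' : ℕ) :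
    ((Fin d × Fin d) × (Fin d' × Fin d')) ≃ ((Fin d × Fin d') × (Fin d × Fin d')) :=
  ⟨fun x => ((x.1.2, x.2.2), (x.1.1, x.2.1)), fun x => ((x.2.1, x.1.1), (x.2.2, x.1.2)),
    fun _ => rfl, fun _ => rfl⟩

lemma frob_zig {d d' : ℕ} (A : Matrix (Fin d × Fin d') (Fin d × Fin d') ℝ) :
    frob (Zig A) = frob A := by
  unfold frob Zig
  congr 1
  rw [← Fintype.sum_prod_type', ← Fintype.sum_prod_type']
  exact Fintype.sum_equiv (zigEquiv d d') _ _ (fun x => rfl)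

lemma zig_sub_kron {d d' : ℕ} (M : Matrix (Fin d × Fin d') (Fin d × Fin d') ℝ)
    (R : Matrix (Fin d) (Fin d) ℝ) (S : Matrix (Fin d') (Fin d') ℝ) :
    Zig (M - R ⊗ₖ S) = Zig M - vecMulVec (vecc R) (vecc S) := by
  ext p q
  simp [Zig, vecMulVec, vecc, kroneckerMap_apply]

lemma frob_key {d d' : ℕ} (M : Matrix (Fin d × Fin d') (Fin d × Fin d') ℝ)
    (R : Matrix (Fin d) (Fin d) ℝ) (S : Matrix (Fin d') (Fin d') ℝ) :
    frob (M - R ⊗ₖ S) = frob (Zig M - vecMulVec (vecc R) (vecc S)) := by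
  rw [← zig_sub_kron, frob_zig]

theorem stmt1 (d d' : ℕ)
    (M : Matrix (Fin d × Fin d') (Fin d × Fin d') ℝ)
    (R : Matrix (Fin d) (Fin d) ℝ) (S : Matrix (Fin d') (Fin d') ℝ) :
    (∀ (R' : Matrix (Fin d) (Fin d) ℝ) (S' : Matrix (Fin d') (Fin d') ℝ),
        frob (M - R ⊗ₖ S) ≤ frob (M - R' ⊗ₖ S')) ↔
    (∀ (x : Fin d × Fin d → ℝ) (y : Fin d' × Fin d' → ℝ),
        frob (Zig M - vecMulVec (vecc R) (vecc S)) ≤ frob (Zig M - vecMulVec x y)) := by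
  constructor
  · intro h x y
    have hx : vecc (matify x) = x := by ext p; simp [vecc, matify]
    have hy : vecc (matify y) = y := by ext p; simp [vecc, matify]
    rw [← frob_key, ← hx, ← hy, ← frob_key]
    exact h _ _
  · intro h R' S'
    rw [frob_key, frob_key]
    exact h _ _
end

section
/- For matrices R ∈ ℝ^{d×d}, S ∈ ℝ^{d'×d'} and any vector u ∈ ℝ^{d²}, the zigzag rearrangement satisfies Z(R⊗S)ᵀu = ⟨vec(R), u⟩ vec(S). -/
open Matrix Kronecker BigOperators

theorem stmt6 (d d' : ℕ)
    (R : Matrix (Fin d) (Fin d) ℝ) (S : Matrix (Fin d') (Fin d') ℝ)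
    (u : Fin d × Fin d → ℝ) :
    (Zig (R ⊗ₖ S))ᵀ.mulVec u = (vecc R ⬝ᵥ u) • vecc S := by
  funext q
  simp only [mulVec, dotProduct, Zig, vecc, transpose_apply, Matrix.of_apply,
    kroneckerMap_apply, Pi.smul_apply, smul_eq_mul, Finset.sum_mul]
  apply Finset.sum_congr rfl
  intro p _
  ring
end

section
/- Let F ∈ ℝ^{d'd×d'd} be positive semi-definite, and let (A, G) with A ∈ ℝ^{d×d}, G ∈ ℝ^{d'×d'} symmetric minimize ‖F − R⊗S‖_F over all (R,S). Write A = Uᵀ D U and G = Vᵀ E V with U, V orthogonal and D, E diagonal. Then the pair (Uᵀ|D|U, Vᵀ|E|V), obtained by replacing the eigenvalues by their absolute values, is also a minimizer; in particular there exists a minimizer consisting of two positive semi-definite symmetric matrices. -/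
open Matrix Kronecker BigOperators

noncomputable def frobsq {m n : Type*} [Fintype m] [Fintype n] (M : Matrix m n ℝ) : ℝ :=
  ∑ i, ∑ j, (M i j) ^ 2

lemma frob_eq_sqrt {m n : Type*} [Fintype m] [Fintype n] (M : Matrix m n ℝ) :
    frob M = Real.sqrt (frobsq M) := rfl

lemma frobsq_eq_trace {n : Type*} [Fintype n] (M : Matrix n n ℝ) :
    frobsq M = (M * Mᵀ).trace := by
  simp [frobsq, Matrix.trace, Matrix.mul_apply, sq, Matrix.diag]

lemma frobsq_conj {n : Type*} [Fintype n] [DecidableEq n] (W M : Matrix n n ℝ)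
    (hW : Wᵀ * W = 1) : frobsq (W * M * Wᵀ) = frobsq M := by
  have key : ∀ X : Matrix n n ℝ, Wᵀ * (W * X) = X := fun X => by
    rw [← Matrix.mul_assoc, hW, Matrix.one_mul]
  have h1 : (W * M * Wᵀ) * (W * M * Wᵀ)ᵀ = W * (M * Mᵀ) * Wᵀ := by
    rw [Matrix.transpose_mul, Matrix.transpose_mul, Matrix.transpose_transpose]
    simp only [Matrix.mul_assoc, key]
  rw [frobsq_eq_trace, frobsq_eq_trace, h1, Matrix.trace_mul_cycle, ← Matrix.mul_assoc, hW,
    Matrix.one_mul]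


theorem stmt9 (d d' : ℕ)
    (F : Matrix (Fin d × Fin d') (Fin d × Fin d') ℝ) (hF : F.PosSemidef)
    (A U D : Matrix (Fin d) (Fin d) ℝ)
    (G V E : Matrix (Fin d') (Fin d') ℝ)
    (hAsymm : A.IsSymm) (hGsymm : G.IsSymm)
    (hU : Uᵀ * U = 1) (hV : Vᵀ * V = 1)
    (hD : D.IsDiag) (hE : E.IsDiag)
    (hA : A = Uᵀ * D * U) (hG : G = Vᵀ * E * V)
    (hmin : ∀ (R : Matrix (Fin d) (Fin d) ℝ) (S : Matrix (Fin d') (Fin d') ℝ),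
      frob (F - A ⊗ₖ G) ≤ frob (F - R ⊗ₖ S)) :
    (∀ (R : Matrix (Fin d) (Fin d) ℝ) (S : Matrix (Fin d') (Fin d') ℝ),
      frob (F - (Uᵀ * (Matrix.of fun i j => |D i j|) * U) ⊗ₖ
                (Vᵀ * (Matrix.of fun i j => |E i j|) * V)) ≤ frob (F - R ⊗ₖ S)) ∧
    (∃ (A' : Matrix (Fin d) (Fin d) ℝ) (G' : Matrix (Fin d') (Fin d') ℝ),
      A'.PosSemidef ∧ G'.PosSemidef ∧
      ∀ (R : Matrix (Fin d) (Fin d) ℝ) (S : Matrix (Fin d') (Fin d') ℝ),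
        frob (F - A' ⊗ₖ G') ≤ frob (F - R ⊗ₖ S)) := by
  set Da : Matrix (Fin d) (Fin d) ℝ := Matrix.of fun i j => |D i j| with hDa
  set Ea : Matrix (Fin d') (Fin d') ℝ := Matrix.of fun i j => |E i j| with hEa
  set W := U ⊗ₖ V with hW
  have hWo : Wᵀ * W = 1 := by
    rw [hW]
    have : (U ⊗ₖ V)ᵀ = Uᵀ ⊗ₖ Vᵀ := rfl
    rw [this, ← Matrix.mul_kronecker_mul, hU, hV, Matrix.one_kronecker_one]
  have hWo' : W * Wᵀ = 1 := mul_eq_one_comm.mp hWo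
  -- conjugation identity
  have conj : ∀ (X : Matrix (Fin d) (Fin d) ℝ) (Y : Matrix (Fin d') (Fin d') ℝ),
      F - (Uᵀ * X * U) ⊗ₖ (Vᵀ * Y * V) = Wᵀ * (W * F * Wᵀ - X ⊗ₖ Y) * W := by
    intro X Y
    have h1 : (Uᵀ * X * U) ⊗ₖ (Vᵀ * Y * V) = Wᵀ * (X ⊗ₖ Y) * W := by
      rw [hW]
      have ht : (U ⊗ₖ V)ᵀ = Uᵀ ⊗ₖ Vᵀ := rfl
      rw [ht, ← Matrix.mul_kronecker_mul, ← Matrix.mul_kronecker_mul]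
    rw [h1, Matrix.mul_sub, Matrix.sub_mul]
    congr 1
    symm
    calc Wᵀ * (W * F * Wᵀ) * W = (Wᵀ * W) * (F * (Wᵀ * W)) := by
          simp only [Matrix.mul_assoc]
      _ = F := by rw [hWo]; simp
  have frobconj : ∀ (X : Matrix (Fin d) (Fin d) ℝ) (Y : Matrix (Fin d') (Fin d') ℝ),
      frobsq (F - (Uᵀ * X * U) ⊗ₖ (Vᵀ * Y * V)) = frobsq (W * F * Wᵀ - X ⊗ₖ Y) := by
    intro X Y
    rw [conj]
    have := frobsq_conj Wᵀ (W * F * Wᵀ - X ⊗ₖ Y) (by rwa [Matrix.transpose_transpose])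
    rwa [Matrix.transpose_transpose] at this
  -- M := W F Wᵀ is PSD with nonneg diagonal
  have hM : (W * F * Wᵀ).PosSemidef := by
    have := hF.mul_mul_conjTranspose_same W
    have he : Wᴴ = Wᵀ := Matrix.conjTranspose_eq_transpose_of_trivial W
    rwa [he] at this
  set M := W * F * Wᵀ with hMdef
  have hMd : ∀ p, 0 ≤ M p p := fun p => by
    have := hM.diag_nonneg (i := p)
    simpa [dotProduct, Matrix.mulVec, Pi.single_apply] using this
  -- entrywise comparison
  have hsq : frobsq (M - Da ⊗ₖ Ea) ≤ frobsq (M - D ⊗ₖ E) := by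
    unfold frobsq
    refine Finset.sum_le_sum fun p _ => Finset.sum_le_sum fun q _ => ?_
    simp only [Matrix.sub_apply, Matrix.kroneckerMap_apply, hDa, hEa, Matrix.of_apply]
    have habs : |D p.1 q.1| * |E p.2 q.2| = |D p.1 q.1 * E p.2 q.2| := (abs_mul _ _).symm
    rw [habs]
    by_cases hpq : p = q
    · subst hpq
      have h0 := hMd p
      nlinarith [le_abs_self (D p.1 p.1 * E p.2 p.2), abs_nonneg (D p.1 p.1 * E p.2 p.2),
        sq_abs (D p.1 p.1 * E p.2 p.2)]
    · have : D p.1 q.1 * E p.2 q.2 = 0 := by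
        rcases Prod.mk.injEq p.1 p.2 q.1 q.2 ▸ (by simpa [Prod.ext_iff] using hpq :
            ¬(p.1 = q.1 ∧ p.2 = q.2)) with h
        by_cases h1 : p.1 = q.1
        · have h2 : p.2 ≠ q.2 := fun h2 => hpq (Prod.ext h1 h2)
          rw [hE h2, mul_zero]
        · rw [hD h1, zero_mul]
      rw [this, abs_zero]
  have hmain : frob (F - (Uᵀ * Da * U) ⊗ₖ (Vᵀ * Ea * V)) ≤ frob (F - A ⊗ₖ G) := by
    rw [frob_eq_sqrt, frob_eq_sqrt, hA, hG]
    rw [frobconj, frobconj]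
    exact Real.sqrt_le_sqrt hsq
  have hmin' : ∀ (R : Matrix (Fin d) (Fin d) ℝ) (S : Matrix (Fin d') (Fin d') ℝ),
      frob (F - (Uᵀ * Da * U) ⊗ₖ (Vᵀ * Ea * V)) ≤ frob (F - R ⊗ₖ S) :=
    fun R S => hmain.trans (hmin R S)
  refine ⟨hmin', ⟨Uᵀ * Da * U, Vᵀ * Ea * V, ?_, ?_, hmin'⟩⟩
  · have hDad : Da = Matrix.diagonal (fun i => |D i i|) := by
      ext i j
      by_cases h : i = j
      · subst h; simp [hDa]
      · simp [hDa, Matrix.diagonal_apply_ne _ h, hD h]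
    have : (Matrix.diagonal (fun i : Fin d => |D i i|)).PosSemidef :=
      Matrix.PosSemidef.diagonal (fun i => abs_nonneg _)
    have h2 := (hDad ▸ this).mul_mul_conjTranspose_same Uᵀ
    rw [Matrix.conjTranspose_eq_transpose_of_trivial, Matrix.transpose_transpose] at h2
    exact h2
  · have hEad : Ea = Matrix.diagonal (fun i => |E i i|) := by
      ext i j
      by_cases h : i = j
      · subst h; simp [hEa]
      · simp [hEa, Matrix.diagonal_apply_ne _ h, hE h]
    have : (Matrix.diagonal (fun i : Fin d' => |E i i|)).PosSemidef :=
      Matrix.PosSemidef.diagonal (fun i => abs_nonneg _)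
    have h2 := (hEad ▸ this).mul_mul_conjTranspose_same Vᵀ
    rw [Matrix.conjTranspose_eq_transpose_of_trivial, Matrix.transpose_transpose] at h2
    exact h2
end

section
/- With A, B symmetric positive definite, C, D symmetric, K₁ = A^{-1/2}E₁, K₂ = B^{-1/2}E₂, s₁ = diag(S₁), s₂ = diag(S₂) as in the simultaneous diagonalization A^{-1/2}CA^{-1/2} = E₁S₁E₁ᵀ, B^{-1/2}DB^{-1/2} = E₂S₂E₂ᵀ, and assuming all entries of 𝟙𝟙ᵀ + s₂s₁ᵀ are nonzero: for every v, the vector u = vec(K₂[(K₂ᵀ V K₁) ⊘ (𝟙𝟙ᵀ + s₂s₁ᵀ)]K₁ᵀ) with V = MAT(v) satisfies (A⊗B + C⊗D)u = v. -/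
open Matrix Kronecker BigOperators

/-- The square root `Matrix.PosSemidef.sqrt` of the older Mathlib, with its old definition. -/
noncomputable def posSemidefSqrt {n : Type*} [Fintype n] [DecidableEq n] {A : Matrix n n ℝ}
    (hA : A.PosSemidef) : Matrix n n ℝ :=
  hA.1.eigenvectorUnitary.1 * diagonal ((↑) ∘ (√·) ∘ hA.1.eigenvalues) *
    (star hA.1.eigenvectorUnitary : Matrix n n ℝ)

lemma posSemidefSqrt_mul_self {n : Type*} [Fintype n] [DecidableEq n] {A : Matrix n n ℝ}
    (hA : A.PosSemidef) : posSemidefSqrt hA * posSemidefSqrt hA = A := by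
  have hU : (star hA.1.eigenvectorUnitary : Matrix n n ℝ) * hA.1.eigenvectorUnitary.1 = 1 :=
    Unitary.coe_star_mul_self _
  have hD : diagonal ((fun x : ℝ => x) ∘ (fun x => √x) ∘ hA.1.eigenvalues) *
      diagonal ((fun x : ℝ => x) ∘ (fun x => √x) ∘ hA.1.eigenvalues)
      = diagonal (RCLike.ofReal ∘ hA.1.eigenvalues) := by
    rw [diagonal_mul_diagonal]
    congr 1
    funext i
    simp [Real.mul_self_sqrt (hA.eigenvalues_nonneg i)]
  conv_rhs => rw [hA.1.spectral_theorem, Unitary.conjStarAlgAut_apply]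
  unfold posSemidefSqrt
  rw [← hD]
  simp only [Matrix.mul_assoc]
  rw [← Matrix.mul_assoc (star _ : Matrix n n ℝ), hU, Matrix.one_mul]

lemma posSemidefSqrt_transpose {n : Type*} [Fintype n] [DecidableEq n] {A : Matrix n n ℝ}
    (hA : A.PosSemidef) : (posSemidefSqrt hA)ᵀ = posSemidefSqrt hA := by
  rw [← conjTranspose_eq_transpose_of_trivial]
  unfold posSemidefSqrt
  have hd : star ((fun x : ℝ => x) ∘ (fun x => √x) ∘ hA.1.eigenvalues) =
      (fun x : ℝ => x) ∘ (fun x => √x) ∘ hA.1.eigenvalues := by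
    funext i; simp
  rw [conjTranspose_mul, conjTranspose_mul, diagonal_conjTranspose, hd]
  simp only [star_eq_conjTranspose, conjTranspose_conjTranspose, Matrix.mul_assoc]

lemma kron_mulVec {n m : ℕ} (X : Matrix (Fin n) (Fin n) ℝ) (Y : Matrix (Fin m) (Fin m) ℝ)
    (M : Matrix (Fin m) (Fin n) ℝ) :
    (X ⊗ₖ Y).mulVec (vecc M) = vecc (Y * M * Xᵀ) := by
  funext p
  obtain ⟨j, i⟩ := p
  simp only [mulVec, dotProduct, vecc, kroneckerMap_apply, Matrix.mul_apply, transpose_apply,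
    Fintype.sum_prod_type, Finset.sum_mul, Finset.mul_sum]
  refine Finset.sum_congr rfl fun j' _ => Finset.sum_congr rfl fun i' _ => by ring

lemma diag_sandwich {n m : ℕ} {S₂ : Matrix (Fin m) (Fin m) ℝ} {S₁ : Matrix (Fin n) (Fin n) ℝ}
    (hS₂ : S₂.IsDiag) (hS₁ : S₁.IsDiag) (W : Matrix (Fin m) (Fin n) ℝ) (i : Fin m) (j : Fin n) :
    (S₂ * W * S₁) i j = S₂ i i * W i j * S₁ j j := by
  rw [Matrix.mul_apply]
  rw [Finset.sum_eq_single j]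
  · rw [Matrix.mul_apply, Finset.sum_eq_single i]
    · intro k _ hk; rw [hS₂ (Ne.symm hk)]; ring
    · simp
  · intro k _ hk; rw [hS₁ hk]; ring
  · simp

theorem stmt14 (n m : ℕ)
    (A C E₁ S₁ K₁ : Matrix (Fin n) (Fin n) ℝ)
    (B D E₂ S₂ K₂ : Matrix (Fin m) (Fin m) ℝ)
    (hA : A.PosDef) (hB : B.PosDef) (hC : C.IsSymm) (hD : D.IsSymm)
    (hE₁ : E₁ᵀ * E₁ = 1) (hE₂ : E₂ᵀ * E₂ = 1)
    (hS₁ : S₁.IsDiag) (hS₂ : S₂.IsDiag)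
    (h₁ : (posSemidefSqrt hA.posSemidef)⁻¹ * C * (posSemidefSqrt hA.posSemidef)⁻¹ = E₁ * S₁ * E₁ᵀ)
    (h₂ : (posSemidefSqrt hB.posSemidef)⁻¹ * D * (posSemidefSqrt hB.posSemidef)⁻¹ = E₂ * S₂ * E₂ᵀ)
    (hK₁ : K₁ = (posSemidefSqrt hA.posSemidef)⁻¹ * E₁)
    (hK₂ : K₂ = (posSemidefSqrt hB.posSemidef)⁻¹ * E₂)
    (hnz : ∀ (i : Fin m) (j : Fin n), 1 + S₂ i i * S₁ j j ≠ 0)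
    (v : Fin n × Fin m → ℝ) :
    (A ⊗ₖ B + C ⊗ₖ D).mulVec
      (vecc (K₂ *
        (Matrix.of fun i j =>
          (K₂ᵀ * matify v * K₁) i j / (1 + S₂ i i * S₁ j j)) * K₁ᵀ)) = v := by
  set P := posSemidefSqrt hA.posSemidef with hPdef
  set Q := posSemidefSqrt hB.posSemidef with hQdef
  have hPP : P * P = A := posSemidefSqrt_mul_self hA.posSemidef
  have hQQ : Q * Q = B := posSemidefSqrt_mul_self hB.posSemidef
  -- symmetry of P, Q
  have hPsymm : Pᵀ = P := by
    exact posSemidefSqrt_transpose hA.posSemidef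
  have hQsymm : Qᵀ = Q := by
    exact posSemidefSqrt_transpose hB.posSemidef
  -- invertibility
  have hPdet : IsUnit P.det := by
    have h : P.det * P.det = A.det := by rw [← Matrix.det_mul, hPP]
    have : A.det ≠ 0 := ne_of_gt hA.det_pos
    refine isUnit_iff_ne_zero.mpr fun h0 => this ?_
    rw [← h, h0, mul_zero]
  have hQdet : IsUnit Q.det := by
    have h : Q.det * Q.det = B.det := by rw [← Matrix.det_mul, hQQ]
    have : B.det ≠ 0 := ne_of_gt hB.det_pos
    refine isUnit_iff_ne_zero.mpr fun h0 => this ?_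
    rw [← h, h0, mul_zero]
  have hPinv : P⁻¹ * P = 1 := Matrix.nonsing_inv_mul P hPdet
  have hPinv' : P * P⁻¹ = 1 := Matrix.mul_nonsing_inv P hPdet
  have hQinv' : Q * Q⁻¹ = 1 := Matrix.mul_nonsing_inv Q hQdet
  have hAsymm : Aᵀ = A := by
    have := hA.isHermitian
    rwa [IsHermitian, conjTranspose_eq_transpose_of_trivial] at this
  -- key products
  have hBK₂ : B * K₂ = Q * E₂ := by
    rw [hK₂, ← hQQ, Matrix.mul_assoc, ← Matrix.mul_assoc Q Q⁻¹, hQinv', Matrix.one_mul]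
  have hK₁T : K₁ᵀ = E₁ᵀ * P⁻¹ := by
    rw [hK₁, Matrix.transpose_mul, Matrix.transpose_nonsing_inv, hPsymm]
  have hK₂T : K₂ᵀ = E₂ᵀ * Q⁻¹ := by
    rw [hK₂, Matrix.transpose_mul, Matrix.transpose_nonsing_inv, hQsymm]
  have hK₁TA : K₁ᵀ * Aᵀ = E₁ᵀ * P := by
    rw [hAsymm, hK₁T, ← hPP, Matrix.mul_assoc, ← Matrix.mul_assoc P⁻¹, hPinv, Matrix.one_mul]
  have hCeq : C = P * (E₁ * S₁ * E₁ᵀ) * P := by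
    rw [← h₁]
    calc C = (P * P⁻¹) * C * (P⁻¹ * P) := by rw [hPinv', hPinv, Matrix.one_mul, Matrix.mul_one]
      _ = P * (P⁻¹ * C * P⁻¹) * P := by simp only [Matrix.mul_assoc]
  have hQinv : Q⁻¹ * Q = 1 := Matrix.nonsing_inv_mul Q hQdet
  have hDeq : D = Q * (E₂ * S₂ * E₂ᵀ) * Q := by
    rw [← h₂]
    calc D = (Q * Q⁻¹) * D * (Q⁻¹ * Q) := by rw [hQinv', hQinv, Matrix.one_mul, Matrix.mul_one]
      _ = Q * (Q⁻¹ * D * Q⁻¹) * Q := by simp only [Matrix.mul_assoc]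
  have hE₂E₂ : E₂ * E₂ᵀ = 1 := mul_eq_one_comm.mp hE₂
  have hE₁E₁ : E₁ * E₁ᵀ = 1 := mul_eq_one_comm.mp hE₁
  have hDK₂ : D * K₂ = Q * E₂ * S₂ := by
    rw [hDeq, hK₂]
    calc Q * (E₂ * S₂ * E₂ᵀ) * Q * (Q⁻¹ * E₂)
        = Q * (E₂ * S₂) * ((E₂ᵀ * (Q * Q⁻¹)) * E₂) := by
          simp only [Matrix.mul_assoc]
      _ = Q * E₂ * S₂ := by
          rw [hQinv', Matrix.mul_one, hE₂]
          simp only [Matrix.mul_assoc, Matrix.mul_one]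
  have hS₁symm : S₁ᵀ = S₁ := by
    ext i j
    by_cases h : i = j
    · subst h; rfl
    · rw [Matrix.transpose_apply, hS₁ (Ne.symm h), hS₁ h]
  have hCsymm : Cᵀ = C := hC
  have hK₁TC : K₁ᵀ * Cᵀ = S₁ * (E₁ᵀ * P) := by
    rw [hCsymm, hK₁T, hCeq]
    calc E₁ᵀ * P⁻¹ * (P * (E₁ * S₁ * E₁ᵀ) * P)
        = E₁ᵀ * ((P⁻¹ * P) * (E₁ * (S₁ * (E₁ᵀ * P)))) := by simp only [Matrix.mul_assoc]
      _ = (E₁ᵀ * E₁) * (S₁ * (E₁ᵀ * P)) := by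
          rw [hPinv, Matrix.one_mul, ← Matrix.mul_assoc]
      _ = S₁ * (E₁ᵀ * P) := by rw [hE₁, Matrix.one_mul]
  set W : Matrix (Fin m) (Fin n) ℝ :=
    Matrix.of fun i j => (K₂ᵀ * matify v * K₁) i j / (1 + S₂ i i * S₁ j j) with hWdef
  have hMW : W + S₂ * W * S₁ = K₂ᵀ * matify v * K₁ := by
    ext i j
    rw [Matrix.add_apply, diag_sandwich hS₂ hS₁]
    show (K₂ᵀ * matify v * K₁) i j / (1 + S₂ i i * S₁ j j) +
      S₂ i i * ((K₂ᵀ * matify v * K₁) i j / (1 + S₂ i i * S₁ j j)) * S₁ j j = _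
    have hd := hnz i j
    field_simp
  have e1 : B * (K₂ * W * K₁ᵀ) * Aᵀ = Q * E₂ * (W * (E₁ᵀ * P)) := by
    calc B * (K₂ * W * K₁ᵀ) * Aᵀ
        = (B * K₂) * (W * (K₁ᵀ * Aᵀ)) := by simp only [Matrix.mul_assoc]
      _ = Q * E₂ * (W * (E₁ᵀ * P)) := by rw [hBK₂, hK₁TA]
  have e2 : D * (K₂ * W * K₁ᵀ) * Cᵀ = Q * E₂ * ((S₂ * W * S₁) * (E₁ᵀ * P)) := by
    calc D * (K₂ * W * K₁ᵀ) * Cᵀ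
        = (D * K₂) * (W * (K₁ᵀ * Cᵀ)) := by simp only [Matrix.mul_assoc]
      _ = (Q * E₂ * S₂) * (W * (S₁ * (E₁ᵀ * P))) := by rw [hDK₂, hK₁TC]
      _ = Q * E₂ * ((S₂ * W * S₁) * (E₁ᵀ * P)) := by simp only [Matrix.mul_assoc]
  have key : B * (K₂ * W * K₁ᵀ) * Aᵀ + D * (K₂ * W * K₁ᵀ) * Cᵀ = matify v := by
    rw [e1, e2, ← Matrix.mul_add, ← Matrix.add_mul, hMW, hK₂T, hK₁]
    calc Q * E₂ * (E₂ᵀ * Q⁻¹ * matify v * (P⁻¹ * E₁) * (E₁ᵀ * P))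
        = Q * ((E₂ * E₂ᵀ) * (Q⁻¹ * (matify v * (P⁻¹ * ((E₁ * E₁ᵀ) * P))))) := by
          simp only [Matrix.mul_assoc]
      _ = Q * (Q⁻¹ * matify v) := by
          rw [hE₂E₂, hE₁E₁, Matrix.one_mul, Matrix.one_mul, hPinv, Matrix.mul_one]
      _ = matify v := by rw [← Matrix.mul_assoc, hQinv', Matrix.one_mul]
  rw [Matrix.add_mulVec, kron_mulVec, kron_mulVec]
  funext p
  have h := congrArg (fun M => M p.2 p.1) key
  simpa [vecc, matify, Matrix.add_apply] using h
end
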